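/- arXiv:1910.04343 — 3 statements merged into one kernel-verified Lean document; each statement's English description precedes it below -/
import Mathlib

section
/- Let I be an index set, ε = (ε_{a,b})_{a,b∈I} a symmetric matrix with entries in {0,1} and ε_{a,a} = 0 for all a, S a set, and for each ι ∈ I a subset K_ι ⊆ S such that K_a ∩ K_b ≠ ∅ whenever a ≠ b and ε_{a,b} = 0. Suppose k ≥ 1 and (ι_1, …, ι_k) ∈ I_k^ε. Let σ be a permutation of {1, …, k} satisfying ι_{σ(j)} = ι_j for all j, and suppose that for every s ∈ S the partition of J_s := {j ∈ {1,…,k} : s ∈ K_{ι_j}} into orbits of σ (note σ preserves each J_s) is a noncrossing partition of J_s. Then σ has at least one fixed point. -/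
/-- **The fixed point proposition.**
Let `ε` be a symmetric `{0,1}`-matrix over `I` with vanishing diagonal, and `K : I → Set S`
be such that `K a ∩ K b ≠ ∅` whenever `a ≠ b` and `ε a b = 0`.  Suppose `k ≥ 1` and
`(ι 0, …, ι (k-1)) ∈ I_k^ε`, and let `σ` be a permutation of `Fin k` stabilizing the word
`ι` such that for every `s ∈ S` the orbit partition of `σ` restricted to
`J_s = {j | s ∈ K (ι j)}` is noncrossing (no `p < q < r < t` in `J_s` with `p, r` in one
orbit and `q, t` in a different orbit).  Then `σ` has a fixed point. -/
theorem fixed_point_of_noncrossing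
    {I S : Type*} (ε : I → I → ℕ)
    (hsym : ∀ a b, ε a b = ε b a)
    (hval : ∀ a b, ε a b = 0 ∨ ε a b = 1)
    (hdiag : ∀ a, ε a a = 0)
    (K : I → Set S)
    (hK : ∀ a b, a ≠ b → ε a b = 0 → (K a ∩ K b).Nonempty)
    (k : ℕ) (hk : 1 ≤ k) (ι : Fin k → I)
    (hι : ∀ j l : Fin k, j < l → ι j = ι l →
      ∃ m : Fin k, j < m ∧ m < l ∧ ι m ≠ ι j ∧ ε (ι j) (ι m) = 0)
    (σ : Equiv.Perm (Fin k)) (hσ : ∀ j, ι (σ j) = ι j)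
    (hnc : ∀ s : S, ∀ p q r t : Fin k,
      s ∈ K (ι p) → s ∈ K (ι q) → s ∈ K (ι r) → s ∈ K (ι t) →
      p < q → q < r → r < t →
      σ.SameCycle p r → σ.SameCycle q t → σ.SameCycle p q) :
    ∃ j, σ j = j := by
  by_contra hfix
  push_neg at hfix
  -- `ι` is invariant under `σ⁻¹` and under all integer powers of `σ`.
  have hinv : ∀ j, ι (σ⁻¹ j) = ι j := by
    intro j
    have h := hσ (σ⁻¹ j)
    rw [show σ (σ⁻¹ j) = j from σ.apply_symm_apply j] at h
    exact h.symm
  have hzpow : ∀ (n : ℤ) (j : Fin k), ι ((σ ^ n) j) = ι j := by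
    intro n
    induction n using Int.induction_on with
    | zero => intro j; simp
    | succ n ih =>
        intro j
        rw [zpow_add_one, Equiv.Perm.mul_apply, ih, hσ]
    | pred n ih =>
        intro j
        rw [zpow_sub_one, Equiv.Perm.mul_apply, ih, hinv]
  have hcyc : ∀ p r : Fin k, σ.SameCycle p r → ι p = ι r := by
    rintro p r ⟨n, rfl⟩
    exact (hzpow n p).symm
  -- the set of distances of same-cycle pairs
  set T : Set ℕ := {d | ∃ p r : Fin k, p < r ∧ σ.SameCycle p r ∧ r.val - p.val = d} with hT
  have hTne : T.Nonempty := by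
    set j0 : Fin k := ⟨0, hk⟩
    have hne : σ j0 ≠ j0 := hfix j0
    have hsc : σ.SameCycle j0 (σ j0) := ⟨1, by simp⟩
    rcases lt_or_gt_of_ne hne with h | h
    · exact ⟨j0.val - (σ j0).val, σ j0, j0, h, hsc.symm, rfl⟩
    · exact ⟨(σ j0).val - j0.val, j0, σ j0, h, hsc, rfl⟩
  obtain ⟨p, r, hpr, hprc, hd⟩ := Nat.sInf_mem hTne
  obtain ⟨m, hpm, hmr, hnem, heps⟩ := hι p r hpr (hcyc p r hprc)
  obtain ⟨s, hsp, hsm⟩ := hK (ι p) (ι m) (Ne.symm hnem) heps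
  have hsr : s ∈ K (ι r) := by rw [← hcyc p r hprc]; exact hsp
  set u := σ m with hu
  have hsu : s ∈ K (ι u) := by rw [hu, hσ]; exact hsm
  have hmu : σ.SameCycle m u := ⟨1, by simp [hu]⟩
  have hnpm : ¬ σ.SameCycle p m := fun h => hnem (hcyc p m h).symm
  have hmune : m ≠ u := fun h => hfix m (by rw [hu] at h; exact h.symm)
  have hpu : p < u := by
    rcases lt_trichotomy u p with h | h | h
    · exact absurd (hmu.trans
        (hnc s u p m r hsu hsp hsm hsr h hpm hmr hmu.symm hprc)) fun hh => hnpm hh.symm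
    · exact absurd (h ▸ hmu).symm hnpm
    · exact h
  have hur : u < r := by
    rcases lt_trichotomy u r with h | h | h
    · exact h
    · exact absurd (hprc.trans (h ▸ hmu).symm) hnpm
    · exact absurd (hnc s p m r u hsp hsm hsr hsu hpm hmr h hprc hmu) hnpm
  -- a closer same-cycle pair, contradiction with minimality
  rcases lt_or_gt_of_ne hmune with h | h
  · have h1 : (u.val - m.val) ∈ T := ⟨m, u, h, hmu, rfl⟩
    have h2 := Nat.sInf_le h1
    have hpm' : p.val < m.val := hpm
    have hur' : u.val < r.val := hur
    have hmu' : m.val < u.val := h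
    have hpr' : p.val < r.val := hpr
    omega
  · have h1 : (m.val - u.val) ∈ T := ⟨u, m, h, hmu.symm, rfl⟩
    have h2 := Nat.sInf_le h1
    have hpu' : p.val < u.val := hpu
    have hmr' : m.val < r.val := hmr
    have hum' : u.val < m.val := h
    have hpr' : p.val < r.val := hpr
    omega
end

section
/- Let k ≥ 1 and let Z be the full cycle of S_k sending each j ∈ ℤ/k to j+1. Let J be a nonempty subset of ℤ/k, and let Z_J ∈ S_k be the permutation fixing every element outside J and sending each element of J to the next element of J in the cyclic order of ℤ/k. Let τ ∈ S_k be any permutation fixing every element outside J (so τ permutes J). Then the number of orbits of τ^{-1}Z acting on ℤ/k equals the number of orbits of τ^{-1}Z_J that are contained in J; equivalently, #(τ^{-1}Z) = #(τ^{-1}Z_J) − (k − |J|), where #(π) denotes the number of orbits of π on ℤ/k (counting fixed points). -/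
/-- The number of orbits of a permutation `π` of `α` (the orbits of the subgroup generated
by `π` acting on `α`), counting fixed points. -/
noncomputable def numOrbits {α : Type*} (π : Equiv.Perm α) : ℕ :=
  Nat.card (MulAction.orbitRel.Quotient (Subgroup.zpowers π) α)

open Equiv MulAction in
/-- Orbit-quotient classes for `zpowers σ` agree iff the points are in the same cycle. -/
lemma mk_eq_mk_iff_sameCycle {α : Type*} (σ : Equiv.Perm α) (x y : α) :
    (Quotient.mk'' x : orbitRel.Quotient (Subgroup.zpowers σ) α) = Quotient.mk'' y ↔
      σ.SameCycle y x := by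
  rw [Quotient.eq'']
  show x ∈ orbit (Subgroup.zpowers σ) y ↔ _
  rw [mem_orbit_iff]
  constructor
  · rintro ⟨⟨g, n, rfl⟩, h⟩
    exact ⟨n, h⟩
  · rintro ⟨n, h⟩
    exact ⟨⟨σ ^ n, n, rfl⟩, h⟩

open Equiv.Perm in
lemma sameCycle_exists_nat_pow {α : Type*} [Finite α] {σ : Equiv.Perm α} {x y : α}
    (h : σ.SameCycle x y) : ∃ n : ℕ, (σ ^ n) x = y := by
  obtain ⟨i, _, hi⟩ := h.exists_pow_eq'
  exact ⟨i, hi⟩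

/-- Let `Z` be the full cycle `j ↦ j + 1` of `ℤ/k`, `J` a nonempty subset of `ℤ/k`, and
`Z_J` the permutation fixing everything outside `J` and sending each `x ∈ J` to the next
element of `J` in cyclic order (i.e. `x + d` for the least `d > 0` with `x + d ∈ J`).
For any permutation `τ` fixing every element outside `J`, the number of orbits of `τ⁻¹ * Z`
on `ℤ/k` equals the number of orbits of `τ⁻¹ * Z_J` contained in `J`; equivalently,
`#(τ⁻¹Z) = #(τ⁻¹Z_J) − (k − |J|)`. -/
theorem numOrbits_full_cycle_restrict (k : ℕ) [NeZero k]
    (Z : Equiv.Perm (ZMod k)) (hZ : ∀ x, Z x = x + 1)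
    (J : Finset (ZMod k)) (hJ : J.Nonempty)
    (ZJ : Equiv.Perm (ZMod k))
    (hZJ_off : ∀ x ∉ J, ZJ x = x)
    (hZJ_on : ∀ x ∈ J, ∃ d : ℕ, 0 < d ∧ ZJ x = x + (d : ZMod k) ∧
      (x + (d : ZMod k)) ∈ J ∧ ∀ e : ℕ, 0 < e → e < d → x + (e : ZMod k) ∉ J)
    (τ : Equiv.Perm (ZMod k)) (hτ : ∀ x ∉ J, τ x = x) :
    numOrbits (τ⁻¹ * Z) + (k - J.card) = numOrbits (τ⁻¹ * ZJ) := by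
  classical
  set σ : Equiv.Perm (ZMod k) := τ⁻¹ * Z with hσdef
  set σ' : Equiv.Perm (ZMod k) := τ⁻¹ * ZJ with hσ'def
  -- τ⁻¹ fixes the complement of J
  have hτfix : ∀ x ∉ J, τ⁻¹ x = x := by
    intro x hx
    conv_lhs => rw [← hτ x hx]
    exact τ.symm_apply_apply x
  have hτJ : ∀ x ∈ J, τ⁻¹ x ∈ J := by
    intro x hx
    by_contra h
    have h2 := hτ _ h
    rw [show τ (τ⁻¹ x) = x from τ.apply_symm_apply x] at h2
    rw [h2] at hx
    exact h hx
  have happ : ∀ x, σ x = τ⁻¹ (x + 1) := by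
    intro x; rw [hσdef, Equiv.Perm.mul_apply, hZ]
  have happ' : ∀ x, σ' x = τ⁻¹ (ZJ x) := by
    intro x; rw [hσ'def, Equiv.Perm.mul_apply]
  have hσ'_off : ∀ x ∉ J, σ' x = x := by
    intro x hx; rw [happ', hZJ_off x hx, hτfix x hx]
  have hσ'_on : ∀ x ∈ J, σ' x ∈ J := by
    intro x hx
    obtain ⟨d, _, hZx, hmem, _⟩ := hZJ_on x hx
    rw [happ', hZx]
    exact hτJ _ hmem
  -- trajectory lemma
  have traj : ∀ (n : ℕ) (y : ZMod k),
      (∀ e : ℕ, 0 < e → e < n + 1 → y + (e : ZMod k) ∉ J) →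
      (σ ^ (n + 1)) y = τ⁻¹ (y + ((n + 1 : ℕ) : ZMod k)) := by
    intro n
    induction n with
    | zero =>
      intro y _
      rw [pow_one, happ]
      norm_num
    | succ n ih =>
      intro y hy
      have h1 : y + ((n + 1 : ℕ) : ZMod k) ∉ J := hy (n + 1) (Nat.succ_pos n) (by omega)
      rw [pow_succ', Equiv.Perm.mul_apply, ih y (fun e he hlt => hy e he (by omega)),
        hτfix _ h1, happ]
      congr 1
      push_cast
      ring
  -- the jump lemma : σ^d x = σ' x for x ∈ J
  have jump : ∀ x ∈ J, ∃ n : ℕ, 0 < n ∧ (σ ^ n) x = σ' x := by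
    intro x hx
    obtain ⟨d, hd0, hZx, hmem, hmin⟩ := hZJ_on x hx
    obtain ⟨m, rfl⟩ : ∃ m, d = m + 1 := ⟨d - 1, by omega⟩
    refine ⟨m + 1, Nat.succ_pos m, ?_⟩
    rw [traj m x (fun e he hlt => hmin e he hlt), happ', hZx]
  -- every σ-orbit meets J
  have reach : ∀ y : ZMod k, ∃ x ∈ J, σ.SameCycle y x := by
    intro y
    by_cases hy : y ∈ J
    · exact ⟨y, hy, Equiv.Perm.SameCycle.rfl⟩
    · obtain ⟨z, hz⟩ := hJ
      have hex : ∃ n : ℕ, y + (n : ZMod k) ∈ J := by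
        refine ⟨(z - y).val, ?_⟩
        rw [ZMod.natCast_rightInverse (z - y)]
        simpa using hz
      have hmem : y + ((Nat.find hex : ℕ) : ZMod k) ∈ J := Nat.find_spec hex
      have hm0 : 0 < Nat.find hex := by
        rcases Nat.eq_zero_or_pos (Nat.find hex) with h | h
        · exfalso; apply hy; rw [h] at hmem; simpa using hmem
        · exact h
      obtain ⟨m', hm'⟩ : ∃ m', Nat.find hex = m' + 1 := ⟨Nat.find hex - 1, by omega⟩
      rw [hm'] at hmem
      have hstep : (σ ^ (m' + 1)) y = τ⁻¹ (y + ((m' + 1 : ℕ) : ZMod k)) := by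
        refine traj m' y (fun e he hlt => ?_)
        exact Nat.find_min hex (by omega)
      refine ⟨(σ ^ (m' + 1)) y, ?_, ⟨(m' + 1 : ℕ), by rw [zpow_natCast]⟩⟩
      rw [hstep]
      exact hτJ _ hmem
  -- forward powers of σ' stay in J and in the same σ-cycle
  have fwd : ∀ x ∈ J, ∀ n : ℕ, (σ' ^ n) x ∈ J ∧ σ.SameCycle x ((σ' ^ n) x) := by
    intro x hx n
    induction n with
    | zero => exact ⟨by simpa using hx, by simpa using Equiv.Perm.SameCycle.rfl⟩
    | succ n ih =>
      obtain ⟨hmem, hsc⟩ := ih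
      have hstep : (σ' ^ (n + 1)) x = σ' ((σ' ^ n) x) := by
        rw [pow_succ', Equiv.Perm.mul_apply]
      obtain ⟨p, _, hp⟩ := jump _ hmem
      constructor
      · rw [hstep]; exact hσ'_on _ hmem
      · refine hsc.trans ?_
        rw [hstep, ← hp]
        exact ⟨(p : ℤ), by rw [zpow_natCast]⟩
  -- σ-same-cycle implies σ'-same-cycle within J
  have back : ∀ n : ℕ, ∀ x ∈ J, (σ ^ n) x ∈ J → σ'.SameCycle x ((σ ^ n) x) := by
    intro n
    induction n using Nat.strong_induction_on with
    | _ n IH =>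
      intro x hx hy
      rcases Nat.eq_zero_or_pos n with h0 | hn0
      · subst h0; simpa using Equiv.Perm.SameCycle.rfl
      obtain ⟨d, hd0, hZx, hmem, hmin⟩ := hZJ_on x hx
      have hjump : (σ ^ d) x = σ' x := by
        obtain ⟨m, rfl⟩ : ∃ m, d = m + 1 := ⟨d - 1, by omega⟩
        rw [traj m x (fun e he hlt => hmin e he hlt), happ', hZx]
      rcases lt_or_ge n d with hlt | hge
      · -- impossible : σ^n x = x + n ∉ J
        exfalso
        obtain ⟨m, rfl⟩ : ∃ m, n = m + 1 := ⟨n - 1, by omega⟩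
        have h1 : (σ ^ (m + 1)) x = τ⁻¹ (x + ((m + 1 : ℕ) : ZMod k)) :=
          traj m x (fun e he hlt => hmin e he (by omega))
        have h2 : x + ((m + 1 : ℕ) : ZMod k) ∉ J := hmin (m + 1) (Nat.succ_pos m) hlt
        rw [h1, hτfix _ h2] at hy
        exact h2 hy
      · have hsplit : (σ ^ n) x = (σ ^ (n - d)) (σ' x) := by
          rw [← hjump, ← Equiv.Perm.mul_apply, ← pow_add]
          congr 2
          omega
        have hx' : σ' x ∈ J := hσ'_on x hx
        have hy' : (σ ^ (n - d)) (σ' x) ∈ J := by rw [← hsplit]; exact hy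
        have hIH := IH (n - d) (by omega) (σ' x) hx' hy'
        have h1 : σ'.SameCycle x (σ' x) := ⟨1, by simp⟩
        rw [hsplit]
        exact h1.trans hIH
  -- the bijection between quotients
  let Q := MulAction.orbitRel.Quotient (Subgroup.zpowers σ) (ZMod k)
  let Q' := MulAction.orbitRel.Quotient (Subgroup.zpowers σ') (ZMod k)
  let g : ZMod k → Q ⊕ {x : ZMod k // x ∉ J} := fun x =>
    if h : x ∈ J then Sum.inl (Quotient.mk'' x) else Sum.inr ⟨x, h⟩
  have hconst : ∀ a b : ZMod k, σ'.SameCycle a b → g a = g b := by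
    intro a b hab
    by_cases ha : a ∈ J
    · obtain ⟨n, hn⟩ := sameCycle_exists_nat_pow hab
      obtain ⟨hbJ, hsc⟩ := fwd a ha n
      rw [hn] at hbJ hsc
      simp only [g, dif_pos ha, dif_pos hbJ]
      congr 1
      rw [mk_eq_mk_iff_sameCycle]
      exact hsc.symm
    · have hb : b = a := (hab.eq_of_left (by exact hσ'_off a ha)).symm
      rw [hb]
  let G : Q' → Q ⊕ {x : ZMod k // x ∉ J} := fun q =>
    Quotient.liftOn' q g (fun a b h => hconst a b (by
      obtain ⟨⟨u, n, rfl⟩, hu⟩ := h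
      refine ⟨-n, ?_⟩
      have hn : (σ' ^ n) b = a := hu
      rw [← hn, ← Equiv.Perm.mul_apply, ← zpow_add]
      simp))
  have hGmk : ∀ x : ZMod k, G (Quotient.mk'' x) = g x := fun x => rfl
  have hinj : Function.Injective G := by
    intro q1 q2 h
    induction q1 using Quotient.inductionOn' with
    | h a =>
    induction q2 using Quotient.inductionOn' with
    | h b =>
    rw [hGmk, hGmk] at h
    simp only [g] at h
    by_cases ha : a ∈ J <;> by_cases hb : b ∈ J
    · rw [dif_pos ha, dif_pos hb] at h
      have hsc : σ.SameCycle b a := by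
        rw [← mk_eq_mk_iff_sameCycle]
        exact Sum.inl.inj h
      obtain ⟨n, hn⟩ := sameCycle_exists_nat_pow hsc.symm
      have := back n a ha (by rw [hn]; exact hb)
      rw [hn] at this
      rw [mk_eq_mk_iff_sameCycle]
      exact this.symm
    · rw [dif_pos ha, dif_neg hb] at h
      exact absurd h (by simp)
    · rw [dif_neg ha, dif_pos hb] at h
      exact absurd h (by simp)
    · rw [dif_neg ha, dif_neg hb] at h
      have := Sum.inr.inj h
      rw [Subtype.mk.injEq] at this
      rw [this]
  have hsurj : Function.Surjective G := by
    rintro (q | ⟨x, hx⟩)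
    · induction q using Quotient.inductionOn' with
      | h y =>
      obtain ⟨x, hxJ, hsc⟩ := reach y
      refine ⟨Quotient.mk'' x, ?_⟩
      rw [hGmk]
      simp only [g, dif_pos hxJ]
      congr 1
      rw [mk_eq_mk_iff_sameCycle]
      exact hsc
    · exact ⟨Quotient.mk'' x, by rw [hGmk]; simp only [g, dif_neg hx]⟩
  have hcard : Nat.card Q' = Nat.card Q + Nat.card {x : ZMod k // x ∉ J} := by
    rw [Nat.card_eq_of_bijective G ⟨hinj, hsurj⟩, Nat.card_sum]
  have hcompl : Nat.card {x : ZMod k // x ∉ J} = k - J.card := by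
    rw [Nat.card_eq_fintype_card, Fintype.card_subtype_compl, ZMod.card]
    congr 1
    exact Fintype.card_coe J
  show numOrbits σ + (k - J.card) = numOrbits σ'
  unfold numOrbits
  rw [show Nat.card (MulAction.orbitRel.Quotient (Subgroup.zpowers σ') (ZMod k)) = Nat.card Q'
    from rfl, hcard, hcompl]
end

section
/- Let k ≥ 1, let Z ∈ S_k be the full cycle j ↦ j+1 (mod k) on {0, 1, …, k−1}, and for a permutation π of {0, …, k−1} write |π| := k − #(π), where #(π) is the number of orbits of π (counting fixed points). If σ, τ ∈ S_k satisfy |σ| + |σ^{-1}τ| + |τ^{-1}Z| = |Z| = k − 1, then the orbit partition of σ and the orbit partition of τ are both noncrossing partitions of {0, 1, …, k−1}; moreover the inequality |Z| ≤ |σ| + |σ^{-1}τ| + |τ^{-1}Z| holds for all σ, τ ∈ S_k. -/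
/-- The Cayley length `|π| := k − #(π)` of a permutation of `Fin k`. -/
noncomputable def permLength {k : ℕ} (π : Equiv.Perm (Fin k)) : ℕ := k - numOrbits π

/-- The orbit partition of a permutation of `Fin k` is noncrossing: there are no
`p < q < r < t` with `p, r` in one orbit and `q, t` in a different orbit. -/
def IsNoncrossing {k : ℕ} (π : Equiv.Perm (Fin k)) : Prop :=
  ∀ p q r t : Fin k, p < q → q < r → r < t →
    π.SameCycle p r → π.SameCycle q t → π.SameCycle p q

section NoncrossingAux

open Equiv Equiv.Perm

set_option linter.unusedSectionVars false

variable {k : ℕ} [NeZero k]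

abbrev OQ (π : Perm (Fin k)) := MulAction.orbitRel.Quotient (Subgroup.zpowers π) (Fin k)

lemma oq_mk_eq_mk {π : Perm (Fin k)} {x y : Fin k} :
    (Quotient.mk'' x : OQ π) = Quotient.mk'' y ↔ π.SameCycle x y := by
  rw [Quotient.eq'']
  show (MulAction.orbitRel (↥(Subgroup.zpowers π)) (Fin k)) x y ↔ _
  rw [MulAction.orbitRel_apply, MulAction.mem_orbit_iff]
  constructor
  · rintro ⟨⟨g, i, rfl⟩, hg⟩
    exact Equiv.Perm.SameCycle.symm ⟨i, hg⟩
  · rintro ⟨i, rfl⟩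
    exact ⟨⟨π ^ (-i), -i, rfl⟩, by simp [Equiv.Perm.smul_def, ← Equiv.Perm.mul_apply, ← zpow_add]⟩

lemma numOrbits_pos (π : Perm (Fin k)) : 0 < numOrbits π := Nat.card_pos

lemma numOrbits_le (π : Perm (Fin k)) : numOrbits π ≤ k := by
  have h : numOrbits π ≤ Nat.card (Fin k) :=
    Nat.card_le_card_of_surjective (Quotient.mk'' : Fin k → OQ π)
      (fun q => Quotient.inductionOn' q (fun x => ⟨x, rfl⟩))
  simpa using h

lemma numOrbits_one : numOrbits (1 : Perm (Fin k)) = k := by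
  have hb : Function.Bijective (Quotient.mk'' : Fin k → OQ (1 : Perm (Fin k))) := by
    constructor
    · intro x y hxy
      simpa [Equiv.Perm.sameCycle_one] using oq_mk_eq_mk.mp hxy
    · exact fun q => Quotient.inductionOn' q (fun x => ⟨x, rfl⟩)
  have := Nat.card_eq_of_bijective _ hb
  simpa [numOrbits] using this.symm

lemma eq_one_of_numOrbits_eq {π : Perm (Fin k)} (h : numOrbits π = k) : π = 1 := by
  classical
  letI : Fintype (OQ π) := Fintype.ofFinite _
  have hsurj : Function.Surjective (Quotient.mk'' : Fin k → OQ π) :=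
    fun q => Quotient.inductionOn' q (fun x => ⟨x, rfl⟩)
  have hcard : Fintype.card (Fin k) = Fintype.card (OQ π) := by
    rw [← Nat.card_eq_fintype_card, ← Nat.card_eq_fintype_card]
    simpa using ((show numOrbits π = Nat.card (OQ π) from rfl).symm.trans h).symm
  have hbij := (Fintype.bijective_iff_surjective_and_card _).2 ⟨hsurj, hcard⟩
  ext x
  have hsc : π.SameCycle x (π x) := ⟨1, by simp⟩
  have h2 : (Quotient.mk'' (π x) : OQ π) = Quotient.mk'' x := oq_mk_eq_mk.mpr hsc.symm
  have h3 : π x = x := hbij.1 h2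
  simp [h3]

lemma sameCycle_fixed {π : Perm (Fin k)} {x y : Fin k} (hx : π x = x)
    (h : π.SameCycle x y) : y = x := by
  obtain ⟨i, rfl⟩ := h
  exact Equiv.Perm.zpow_apply_eq_self_of_apply_eq_self hx i

lemma sameCycle_mem_of_closed {π : Perm (Fin k)} {S : Set (Fin k)}
    (hS : ∀ x ∈ S, π x ∈ S) {x y : Fin k} (hx : x ∈ S) (h : π.SameCycle x y) : y ∈ S := by
  obtain ⟨i, -, rfl⟩ := h.exists_pow_eq'
  clear h
  induction i with
  | zero => simpa using hx
  | succ n ih => rw [pow_succ', Equiv.Perm.mul_apply]; exact hS _ ih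

lemma sameCycle_of_swap_mul {π : Perm (Fin k)} {a b : Fin k} (h : π.SameCycle a b)
    {x y : Fin k} (hxy : (Equiv.swap a b * π).SameCycle x y) : π.SameCycle x y := by
  have step : ∀ z : Fin k, π.SameCycle z ((Equiv.swap a b * π) z) := by
    intro z
    have hz : π.SameCycle z (π z) := ⟨1, by simp⟩
    rw [Equiv.Perm.mul_apply]
    rcases eq_or_ne (π z) a with h1 | h1
    · rw [h1, Equiv.swap_apply_left]
      exact (h1 ▸ hz).trans h
    · rcases eq_or_ne (π z) b with h2 | h2
      · rw [h2, Equiv.swap_apply_right]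
        exact (h2 ▸ hz).trans h.symm
      · rw [Equiv.swap_apply_of_ne_of_ne h1 h2]
        exact hz
  obtain ⟨i, -, rfl⟩ := hxy.exists_pow_eq'
  clear hxy
  induction i with
  | zero => simpa using Equiv.Perm.SameCycle.refl π x
  | succ n ih =>
      rw [pow_succ', Equiv.Perm.mul_apply]
      exact ih.trans (step _)

lemma sameCycle_swap_mul_decomp {π : Perm (Fin k)} {a b : Fin k}
    {x y : Fin k} (hxy : π.SameCycle x y) :
    (Equiv.swap a b * π).SameCycle x y ∨
      ((Equiv.swap a b * π).SameCycle x a ∨ (Equiv.swap a b * π).SameCycle x b) ∧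
      ((Equiv.swap a b * π).SameCycle y a ∨ (Equiv.swap a b * π).SameCycle y b) := by
  set π' := Equiv.swap a b * π with hπ'
  let R : Fin k → Fin k → Prop := fun u v =>
    π'.SameCycle u v ∨ ((π'.SameCycle u a ∨ π'.SameCycle u b) ∧
      (π'.SameCycle v a ∨ π'.SameCycle v b))
  have Rtrans : ∀ {u v w}, R u v → R v w → R u w := by
    rintro u v w (huv | ⟨hu, hv⟩) (hvw | ⟨hv', hw⟩)
    · exact Or.inl (huv.trans hvw)
    · exact Or.inr ⟨hv'.imp huv.trans huv.trans, hw⟩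
    · refine Or.inr ⟨hu, hv.imp hvw.symm.trans hvw.symm.trans⟩
    · exact Or.inr ⟨hu, hw⟩
  have step : ∀ z : Fin k, R z (π z) := by
    intro z
    have hz : π'.SameCycle z (π' z) := ⟨1, by simp⟩
    rcases eq_or_ne (π' z) a with h1 | h1
    · refine Or.inr ⟨Or.inl (h1 ▸ hz), Or.inr ?_⟩
      have : π z = Equiv.swap a b (π' z) := by
        rw [hπ', Equiv.Perm.mul_apply, Equiv.swap_apply_self]
      rw [this, h1, Equiv.swap_apply_left]
    · rcases eq_or_ne (π' z) b with h2 | h2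
      · refine Or.inr ⟨Or.inr (h2 ▸ hz), Or.inl ?_⟩
        have : π z = Equiv.swap a b (π' z) := by
          rw [hπ', Equiv.Perm.mul_apply, Equiv.swap_apply_self]
        rw [this, h2, Equiv.swap_apply_right]
      · have e : π' z = Equiv.swap a b (π z) := by rw [hπ', Equiv.Perm.mul_apply]
        have e2 : π z = π' z := by
          rcases eq_or_ne (π z) a with h3 | h3
          · exfalso; apply h2; rw [e, h3, Equiv.swap_apply_left]
          · rcases eq_or_ne (π z) b with h4 | h4
            · exfalso; apply h1; rw [e, h4, Equiv.swap_apply_right]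
            · rw [e, Equiv.swap_apply_of_ne_of_ne h3 h4]
        exact Or.inl (by rw [e2]; exact hz)
  have main : R x y := by
    obtain ⟨i, -, rfl⟩ := hxy.exists_pow_eq'
    clear hxy
    induction i with
    | zero => simpa using Or.inl (Equiv.Perm.SameCycle.refl π' x)
    | succ n ih =>
        rw [pow_succ', Equiv.Perm.mul_apply]
        exact Rtrans ih (step _)
  exact main

lemma not_sameCycle_swap_mul_self {π : Perm (Fin k)} {a b : Fin k} (hab : a ≠ b)
    (h : π.SameCycle a b) : ¬ (Equiv.swap a b * π).SameCycle a b := by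
  obtain ⟨i0, -, hi0⟩ := h.exists_pow_eq'
  have hex : ∃ m : ℕ, (π ^ m) a = b := ⟨i0, hi0⟩
  set n := Nat.find hex with hn
  have hnspec : (π ^ n) a = b := Nat.find_spec hex
  have hnpos : 0 < n := by
    rcases Nat.eq_zero_or_pos n with h0 | h0
    · exfalso; apply hab; rw [← hnspec, h0, pow_zero]; rfl
    · exact h0
  set S : Set (Fin k) := {x | ∃ i < n, (π ^ i) a = x} with hS
  have haS : a ∈ S := ⟨0, hnpos, by simp⟩
  have hbS : b ∉ S := by
    rintro ⟨i, hi, hieq⟩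
    rcases Nat.eq_zero_or_pos i with h0 | h0
    · apply hab; rw [← hieq, h0, pow_zero]; rfl
    · exact Nat.find_min hex hi hieq
  have hcl : ∀ x ∈ S, (Equiv.swap a b * π) x ∈ S := by
    rintro x ⟨i, hi, rfl⟩
    rw [Equiv.Perm.mul_apply, ← Equiv.Perm.mul_apply π, ← pow_succ']
    rcases eq_or_ne (i + 1) n with he | he
    · rw [he, hnspec, Equiv.swap_apply_right]
      exact haS
    · have hlt : i + 1 < n := lt_of_le_of_ne hi he
      have h1 : (π ^ (i + 1)) a ≠ b := Nat.find_min hex hlt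
      have h2 : (π ^ (i + 1)) a ≠ a := by
        intro hcon
        have : (π ^ (n - (i+1))) ((π ^ (i+1)) a) = b := by
          rw [← Equiv.Perm.mul_apply, ← pow_add, Nat.sub_add_cancel hlt.le, hnspec]
        rw [hcon] at this
        rcases Nat.eq_zero_or_pos (n - (i+1)) with h0 | _
        · apply hab; rw [← this, h0, pow_zero]; rfl
        · exact Nat.find_min hex (by omega) this
      rw [Equiv.swap_apply_of_ne_of_ne h2 h1]
      exact ⟨i + 1, hlt, rfl⟩
  intro hcon
  exact hbS (sameCycle_mem_of_closed hcl haS hcon)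

lemma sameCycle_swap_mul_of_not {π : Perm (Fin k)} {a b : Fin k}
    (h : ¬ π.SameCycle a b) : (Equiv.swap a b * π).SameCycle a b := by
  have hab : a ≠ b := fun e => h (e ▸ Equiv.Perm.SameCycle.refl π a)
  have hex : ∃ m : ℕ, (π ^ (m + 1)) a = a := by
    refine ⟨orderOf π - 1, ?_⟩
    rw [Nat.sub_add_cancel (orderOf_pos π), pow_orderOf_eq_one]; rfl
  set m := Nat.find hex with hm
  have hmspec : (π ^ (m + 1)) a = a := Nat.find_spec hex
  have key : ∀ i, i ≤ m → ((Equiv.swap a b * π) ^ i) a = (π ^ i) a := by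
    intro i hi
    induction i with
    | zero => rfl
    | succ j ih =>
        rw [pow_succ', Equiv.Perm.mul_apply, ih (by omega), Equiv.Perm.mul_apply,
          ← Equiv.Perm.mul_apply π, ← pow_succ']
        have h1 : (π ^ (j + 1)) a ≠ a := Nat.find_min hex (by omega)
        have h2 : (π ^ (j + 1)) a ≠ b := by
          intro hcon; exact h ⟨(j + 1 : ℕ), by rw [zpow_natCast]; exact hcon⟩
        rw [Equiv.swap_apply_of_ne_of_ne h1 h2]
  have : ((Equiv.swap a b * π) ^ (m + 1)) a = b := by
    rw [pow_succ', Equiv.Perm.mul_apply, key m le_rfl, Equiv.Perm.mul_apply,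
      ← Equiv.Perm.mul_apply π, ← pow_succ', hmspec, Equiv.swap_apply_left]
  exact ⟨(m + 1 : ℕ), by rw [zpow_natCast]; exact this⟩

lemma numOrbits_swap_mul_of_sameCycle {π : Perm (Fin k)} {a b : Fin k} (hab : a ≠ b)
    (h : π.SameCycle a b) : numOrbits (Equiv.swap a b * π) = numOrbits π + 1 := by
  classical
  set π' := Equiv.swap a b * π with hπ'
  have hA : ∀ {x y : Fin k}, π'.SameCycle x y → π.SameCycle x y :=
    fun hxy => sameCycle_of_swap_mul h hxy
  have hB : ¬ π'.SameCycle a b := not_sameCycle_swap_mul_self hab h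
  let g : Fin k → {q : OQ π' // q ≠ Quotient.mk'' b} := fun x =>
    if hbx : π'.SameCycle b x then
      ⟨Quotient.mk'' a, fun hc => hB (oq_mk_eq_mk.mp hc)⟩
    else
      ⟨Quotient.mk'' x, fun hc => hbx (oq_mk_eq_mk.mp hc).symm⟩
  have hg : ∀ x y : Fin k, π.SameCycle x y → g x = g y := by
    intro x y hxy
    by_cases hbx : π'.SameCycle b x <;> by_cases hby : π'.SameCycle b y
    · simp only [g, dif_pos hbx, dif_pos hby]
    · -- x in class of b, y not: then y ~' a
      have hya : π'.SameCycle y a := by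
        rcases sameCycle_swap_mul_decomp (a := a) (b := b) hxy with h' | ⟨-, hy⟩
        · exact absurd (hbx.trans h') hby
        · rcases hy with hy | hy
          · exact hy
          · exact absurd hy.symm hby
      simp only [g, dif_pos hbx, dif_neg hby]
      exact Subtype.ext (oq_mk_eq_mk.mpr hya.symm)
    · have hxa : π'.SameCycle x a := by
        rcases sameCycle_swap_mul_decomp (a := a) (b := b) hxy.symm with h' | ⟨-, hx⟩
        · exact absurd (hby.trans h') hbx
        · rcases hx with hx | hx
          · exact hx
          · exact absurd hx.symm hbx
      simp only [g, dif_neg hbx, dif_pos hby]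
      exact Subtype.ext (oq_mk_eq_mk.mpr hxa)
    · have hxy' : π'.SameCycle x y := by
        rcases sameCycle_swap_mul_decomp (a := a) (b := b) hxy with h' | ⟨hx, hy⟩
        · exact h'
        · have hxa : π'.SameCycle x a := by
            rcases hx with hx | hx
            · exact hx
            · exact absurd hx.symm hbx
          have hya : π'.SameCycle y a := by
            rcases hy with hy | hy
            · exact hy
            · exact absurd hy.symm hby
          exact hxa.trans hya.symm
      simp only [g, dif_neg hbx, dif_neg hby]
      exact Subtype.ext (oq_mk_eq_mk.mpr hxy')
  let G : OQ π → {q : OQ π' // q ≠ Quotient.mk'' b} :=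
    Quotient.lift g (fun x y hr => hg x y (oq_mk_eq_mk.mp (Quotient.sound' hr)))
  have hGmk : ∀ x : Fin k, G (Quotient.mk'' x) = g x := fun _ => rfl
  have hGbij : Function.Bijective G := by
    constructor
    · intro q1 q2
      refine Quotient.inductionOn₂' q1 q2 (fun x y heq => ?_)
      rw [hGmk, hGmk] at heq
      have heqv := Subtype.ext_iff.mp heq
      apply Quotient.sound'
      rw [← Quotient.eq'']
      show (Quotient.mk'' x : OQ π) = Quotient.mk'' y
      rw [oq_mk_eq_mk]
      by_cases hbx : π'.SameCycle b x <;> by_cases hby : π'.SameCycle b y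
      · exact (hA hbx.symm).trans (hA hby)
      · simp only [g, dif_pos hbx, dif_neg hby] at heqv
        have hay : π'.SameCycle a y := oq_mk_eq_mk.mp heqv
        exact (hA hbx.symm).trans (h.symm.trans (hA hay))
      · simp only [g, dif_neg hbx, dif_pos hby] at heqv
        have hax : π'.SameCycle a x := oq_mk_eq_mk.mp heqv.symm
        exact ((hA hax).symm).trans (h.trans (hA hby))
      · simp only [g, dif_neg hbx, dif_neg hby] at heqv
        exact hA (oq_mk_eq_mk.mp heqv)
    · rintro ⟨q, hq⟩
      refine Quotient.inductionOn' q (fun y hq => ?_) hq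
      have hby : ¬ π'.SameCycle b y := fun hc => hq (oq_mk_eq_mk.mpr hc.symm)
      exact ⟨Quotient.mk'' y, by rw [hGmk]; exact Subtype.ext (by simp only [g, dif_neg hby])⟩
  have hcard1 : numOrbits π = Nat.card {q : OQ π' // q ≠ Quotient.mk'' b} :=
    Nat.card_eq_of_bijective G hGbij
  letI : Fintype (OQ π') := Fintype.ofFinite _
  have h1 : Fintype.card {q : OQ π' // q = Quotient.mk'' b} = 1 :=
    Fintype.card_subtype_eq _
  have h2 : Fintype.card {q : OQ π' // q ≠ Quotient.mk'' b} = Fintype.card (OQ π') - 1 := by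
    rw [Fintype.card_subtype_compl, h1]
  have h3 : numOrbits π' = Fintype.card (OQ π') := Nat.card_eq_fintype_card
  have h4 : Nat.card {q : OQ π' // q ≠ Quotient.mk'' b} =
      Fintype.card {q : OQ π' // q ≠ Quotient.mk'' b} := Nat.card_eq_fintype_card
  have h5 : 0 < numOrbits π' := numOrbits_pos π'
  omega

lemma numOrbits_swap_mul_of_not_sameCycle {π : Perm (Fin k)} {a b : Fin k}
    (h : ¬ π.SameCycle a b) : numOrbits (Equiv.swap a b * π) + 1 = numOrbits π := by
  have hab : a ≠ b := fun e => h (e ▸ Equiv.Perm.SameCycle.refl π a)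
  have h2 : (Equiv.swap a b * π).SameCycle a b := sameCycle_swap_mul_of_not h
  have h3 := numOrbits_swap_mul_of_sameCycle hab h2
  rw [Equiv.swap_mul_self_mul] at h3
  omega

lemma numOrbits_le_swap_mul (a b : Fin k) (β : Perm (Fin k)) :
    numOrbits β ≤ numOrbits (Equiv.swap a b * β) + 1 := by
  rcases eq_or_ne a b with rfl | hab
  · rw [Equiv.swap_self]
    have : (Equiv.refl (Fin k) : Perm (Fin k)) * β = β := by
      ext x; rfl
    rw [this]; omega
  · by_cases h : β.SameCycle a b
    · rw [numOrbits_swap_mul_of_sameCycle hab h]; omega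
    · rw [← numOrbits_swap_mul_of_not_sameCycle h]

lemma exists_swap_list : ∀ (m : ℕ) (π : Perm (Fin k)), k ≤ numOrbits π + m →
    ∃ l : List (Perm (Fin k)), (∀ s ∈ l, ∃ a b : Fin k, s = Equiv.swap a b) ∧
      l.prod = π ∧ l.length + numOrbits π = k := by
  intro m
  induction m with
  | zero =>
    intro π hm
    have h1 : numOrbits π = k := le_antisymm (numOrbits_le π) (by omega)
    refine ⟨[], by simp, ?_, by simp only [List.length_nil]; omega⟩
    rw [List.prod_nil, eq_one_of_numOrbits_eq h1]
  | succ m ih =>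
    intro π hm
    by_cases hπ : π = 1
    · subst hπ
      exact ⟨[], by simp, by simp, by simp [numOrbits_one]⟩
    · have : ∃ a : Fin k, π a ≠ a := by
        by_contra hc
        push_neg at hc
        exact hπ (Equiv.ext fun x => by simp [hc x])
      obtain ⟨a, ha⟩ := this
      have hsc : π.SameCycle a (π a) := ⟨1, by simp⟩
      have hn : numOrbits (Equiv.swap a (π a) * π) = numOrbits π + 1 :=
        numOrbits_swap_mul_of_sameCycle (Ne.symm ha) hsc
      obtain ⟨l, hl1, hl2, hl3⟩ := ih (Equiv.swap a (π a) * π) (by omega)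
      refine ⟨Equiv.swap a (π a) :: l, ?_, ?_, ?_⟩
      · intro s hs
        rcases List.mem_cons.mp hs with rfl | hs'
        · exact ⟨a, π a, rfl⟩
        · exact hl1 s hs'
      · rw [List.prod_cons, hl2, Equiv.swap_mul_self_mul]
      · simp only [List.length_cons]; omega

lemma numOrbits_le_list_mul (l : List (Perm (Fin k)))
    (hl : ∀ s ∈ l, ∃ a b : Fin k, s = Equiv.swap a b) (β : Perm (Fin k)) :
    numOrbits β ≤ numOrbits (l.prod * β) + l.length := by
  induction l generalizing β with
  | nil => simp
  | cons s l ih =>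
    obtain ⟨a, b, rfl⟩ := hl s List.mem_cons_self
    have h1 := ih (fun s hs => hl s (List.mem_cons_of_mem _ hs)) β
    have h2 := numOrbits_le_swap_mul a b (l.prod * β)
    have h3 : (Equiv.swap a b :: l).prod * β = Equiv.swap a b * (l.prod * β) := by
      rw [List.prod_cons, mul_assoc]
    rw [h3, List.length_cons]
    omega

lemma numOrbits_triangle (α β : Perm (Fin k)) :
    numOrbits α + numOrbits β ≤ k + numOrbits (α * β) := by
  obtain ⟨l, hl1, hl2, hl3⟩ := exists_swap_list k α (by omega)
  have := numOrbits_le_list_mul l hl1 β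
  rw [hl2] at this
  omega

lemma numOrbits_eq_one {π : Perm (Fin k)} (h : ∀ x y : Fin k, π.SameCycle x y) :
    numOrbits π = 1 := by
  have hsub : Subsingleton (OQ π) :=
    ⟨fun q1 q2 => Quotient.inductionOn₂' q1 q2 fun x y => oq_mk_eq_mk.mpr (h x y)⟩
  rw [numOrbits, Nat.card_eq_one_iff_unique]
  exact ⟨hsub, ⟨Quotient.mk'' ⟨0, Nat.pos_of_ne_zero (NeZero.ne k)⟩⟩⟩

open Fin.NatCast Fin.CommRing in
lemma z_pow_apply {Z : Perm (Fin k)} (hZ : ∀ j, Z j = j + 1) (m : ℕ) (x : Fin k) :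
    (Z ^ m) x = x + (m : Fin k) := by
  induction m with
  | zero => simp
  | succ n ih =>
      rw [pow_succ', Equiv.Perm.mul_apply, ih, hZ]
      push_cast
      ring

open Fin.NatCast Fin.CommRing in
lemma z_sameCycle {Z : Perm (Fin k)} (hZ : ∀ j, Z j = j + 1) :
    ∀ x y : Fin k, Z.SameCycle x y := by
  intro x y
  refine ⟨((y - x).val : ℕ), ?_⟩
  rw [zpow_natCast, z_pow_apply hZ, Fin.cast_val_eq_self]
  ring

lemma fin_add_one_val {x : Fin k} (hk : 1 < k) (h : x.val + 1 < k) :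
    (x + 1).val = x.val + 1 := by
  rw [Fin.val_add, Fin.val_one', Nat.mod_eq_of_lt hk, Nat.mod_eq_of_lt h]

lemma not_sameCycle_aux {Z : Perm (Fin k)} (hZ : ∀ j, Z j = j + 1)
    {p q r t : Fin k} (hpq : p < q) (hqr : q < r) (hrt : r < t) :
    ¬ (Equiv.swap p r * Z).SameCycle q t := by
  intro hcon
  have hpq' : p.val < q.val := hpq
  have hqr' : q.val < r.val := hqr
  have hrt' : r.val < t.val := hrt
  have htk : t.val < k := t.isLt
  set S : Set (Fin k) := {x | p.val ≤ x.val ∧ x.val < r.val} with hSdef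
  have hcl : ∀ x ∈ S, (Equiv.swap p r * Z) x ∈ S := by
    rintro x ⟨h1, h2⟩
    rw [Equiv.Perm.mul_apply, hZ]
    have hxv : (x + 1).val = x.val + 1 := fin_add_one_val (by omega) (by omega)
    rcases eq_or_ne (x.val + 1) r.val with he | he
    · have hxr : x + 1 = r := Fin.ext (by rw [hxv, he])
      rw [hxr, Equiv.swap_apply_right]
      exact ⟨le_rfl, by omega⟩
    · have hne1 : x + 1 ≠ p := fun hc => by
        have := congrArg Fin.val hc; rw [hxv] at this; omega
      have hne2 : x + 1 ≠ r := fun hc => by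
        have := congrArg Fin.val hc; rw [hxv] at this; omega
      rw [Equiv.swap_apply_of_ne_of_ne hne1 hne2]
      exact ⟨by rw [hxv]; omega, by rw [hxv]; omega⟩
  have hq : q ∈ S := ⟨by omega, by omega⟩
  have hmem := sameCycle_mem_of_closed hcl hq hcon
  exact absurd hmem.2 (by omega)

lemma conj_key {σ Zp : Perm (Fin k)} {a : Fin k} :
    (Equiv.swap a (σ a) * σ)⁻¹ * Zp = Equiv.swap (σ⁻¹ a) a * (σ⁻¹ * Zp) := by
  have h1 : Equiv.swap (σ⁻¹ a) (σ⁻¹ (σ a)) = σ⁻¹ * Equiv.swap a (σ a) * (σ⁻¹)⁻¹ :=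
    Equiv.swap_apply_apply σ⁻¹ a (σ a)
  have h2 : σ⁻¹ (σ a) = a := by simp
  rw [h2, inv_inv] at h1
  rw [mul_inv_rev, Equiv.swap_inv]
  calc σ⁻¹ * Equiv.swap a (σ a) * Zp
      = (σ⁻¹ * Equiv.swap a (σ a) * σ) * (σ⁻¹ * Zp) := by group
    _ = Equiv.swap (σ⁻¹ a) a * (σ⁻¹ * Zp) := by rw [← h1]

lemma nc_main {Z : Perm (Fin k)} (hZ : ∀ j : Fin k, Z j = j + 1) :
    ∀ (m : ℕ) (σ : Perm (Fin k)), k - numOrbits σ ≤ m →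
      numOrbits σ + numOrbits (σ⁻¹ * Z) = k + 1 → IsNoncrossing σ := by
  have hZall := z_sameCycle hZ
  have hnZ : numOrbits Z = 1 := numOrbits_eq_one hZall
  intro m
  induction m with
  | zero =>
    intro σ hm geo p q r t hpq hqr hrt hpr hqt
    have hb := numOrbits_le σ
    have h1 : numOrbits σ = k := by omega
    have h2 : σ = 1 := eq_one_of_numOrbits_eq h1
    subst h2
    rw [Equiv.Perm.sameCycle_one] at hpr
    exact absurd hpr (ne_of_lt (hpq.trans hqr))
  | succ m ih =>
    intro σ hm geo p q r t hpq hqr hrt hpr hqt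
    by_contra hnpq
    have hnpr : p ≠ r := ne_of_lt (hpq.trans hqr)
    have hnqt : q ≠ t := ne_of_lt (hqr.trans hrt)
    have hnpq' : p ≠ q := ne_of_lt hpq
    have hnpt : p ≠ t := ne_of_lt ((hpq.trans hqr).trans hrt)
    have hnqr : q ≠ r := ne_of_lt hqr
    have hnrt : r ≠ t := ne_of_lt hrt
    by_cases hfix : ∀ a : Fin k, a ≠ p → a ≠ q → a ≠ r → a ≠ t → σ a = a
    · -- terminal configuration : σ = (p r)(q t)
      have hfp : ∀ x : Fin k, σ.SameCycle p x → x = p ∨ x = r := by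
        intro x hx
        by_cases hxp : x = p
        · exact Or.inl hxp
        · by_cases hxr : x = r
          · exact Or.inr hxr
          · by_cases hxq : x = q
            · exact absurd (hxq ▸ hx) hnpq
            · by_cases hxt : x = t
              · exact absurd ((hxt ▸ hx).trans hqt.symm) hnpq
              · have hfx := hfix x hxp hxq hxr hxt
                exact absurd (sameCycle_fixed hfx hx.symm).symm hxp
      have hfq : ∀ x : Fin k, σ.SameCycle q x → x = q ∨ x = t := by
        intro x hx
        by_cases hxq : x = q
        · exact Or.inl hxq
        · by_cases hxt : x = t
          · exact Or.inr hxt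
          · by_cases hxp : x = p
            · exact absurd (hxp ▸ hx).symm hnpq
            · by_cases hxr : x = r
              · exact absurd (hpr.trans (hxr ▸ hx).symm) hnpq
              · have hfx := hfix x hxp hxq hxr hxt
                exact absurd (sameCycle_fixed hfx hx.symm).symm hxq
      have hσp : σ p = r := by
        have h1 : σ.SameCycle p (σ p) := ⟨1, by simp⟩
        rcases hfp _ h1 with he | he
        · exact absurd (sameCycle_fixed he hpr).symm hnpr
        · exact he
      have hσr : σ r = p := by
        have h1 : σ.SameCycle r (σ r) := ⟨1, by simp⟩
        rcases hfp _ (hpr.trans h1) with he | he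
        · exact he
        · exact absurd (sameCycle_fixed he hpr.symm) hnpr
      have hσq : σ q = t := by
        have h1 : σ.SameCycle q (σ q) := ⟨1, by simp⟩
        rcases hfq _ h1 with he | he
        · exact absurd (sameCycle_fixed he hqt).symm hnqt
        · exact he
      have hσt : σ t = q := by
        have h1 : σ.SameCycle t (σ t) := ⟨1, by simp⟩
        rcases hfq _ (hqt.trans h1) with he | he
        · exact he
        · exact absurd (sameCycle_fixed he hqt.symm) hnqt
      have hform : σ = Equiv.swap p r * Equiv.swap q t := by
        ext x
        rw [Equiv.Perm.mul_apply]
        by_cases hxp : x = p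
        · rw [hxp, hσp, Equiv.swap_apply_of_ne_of_ne hnpq' hnpt, Equiv.swap_apply_left]
        · by_cases hxq : x = q
          · rw [hxq, hσq, Equiv.swap_apply_left,
              Equiv.swap_apply_of_ne_of_ne (Ne.symm hnpt) (Ne.symm hnrt)]
          · by_cases hxr : x = r
            · rw [hxr, hσr, Equiv.swap_apply_of_ne_of_ne (Ne.symm hnqr) hnrt,
                Equiv.swap_apply_right]
            · by_cases hxt : x = t
              · rw [hxt, hσt, Equiv.swap_apply_right,
                  Equiv.swap_apply_of_ne_of_ne (Ne.symm hnpq') hnqr]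
              · rw [hfix x hxp hxq hxr hxt, Equiv.swap_apply_of_ne_of_ne hxq hxt,
                  Equiv.swap_apply_of_ne_of_ne hxp hxr]
      have hone : ¬ (1 : Perm (Fin k)).SameCycle q t := by
        rw [Equiv.Perm.sameCycle_one]; exact hnqt
      have n1 : numOrbits (Equiv.swap q t * 1) + 1 = numOrbits (1 : Perm (Fin k)) :=
        numOrbits_swap_mul_of_not_sameCycle hone
      rw [mul_one] at n1
      have hfixp : (Equiv.swap q t) p = p := Equiv.swap_apply_of_ne_of_ne hnpq' hnpt
      have hnsc1 : ¬ (Equiv.swap q t).SameCycle p r :=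
        fun hc => absurd (sameCycle_fixed hfixp hc).symm hnpr
      have n2 : numOrbits (Equiv.swap p r * Equiv.swap q t) + 1 =
          numOrbits (Equiv.swap q t) := numOrbits_swap_mul_of_not_sameCycle hnsc1
      have n3 : numOrbits (Equiv.swap p r * Z) = numOrbits Z + 1 :=
        numOrbits_swap_mul_of_sameCycle hnpr (hZall p r)
      have hnsc2 := not_sameCycle_aux hZ hpq hqr hrt
      have n4 : numOrbits (Equiv.swap q t * (Equiv.swap p r * Z)) + 1 =
          numOrbits (Equiv.swap p r * Z) := numOrbits_swap_mul_of_not_sameCycle hnsc2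
      have hinv : σ⁻¹ * Z = Equiv.swap q t * (Equiv.swap p r * Z) := by
        rw [hform, mul_inv_rev, Equiv.swap_inv, Equiv.swap_inv, mul_assoc]
      have geo' : numOrbits (Equiv.swap p r * Equiv.swap q t) +
          numOrbits (Equiv.swap q t * (Equiv.swap p r * Z)) = k + 1 := by
        rw [← hform, ← hinv]; exact geo
      have hno := numOrbits_one (k := k)
      omega
    · push_neg at hfix
      obtain ⟨a, hap, haq, har, hat, ha⟩ := hfix
      have hab : a ≠ σ a := Ne.symm ha
      have hscab : σ.SameCycle a (σ a) := ⟨1, by simp⟩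
      have hn' : numOrbits (Equiv.swap a (σ a) * σ) = numOrbits σ + 1 :=
        numOrbits_swap_mul_of_sameCycle hab hscab
      set σ' := Equiv.swap a (σ a) * σ with hσ'
      have hkey : σ'⁻¹ * Z = Equiv.swap (σ⁻¹ a) a * (σ⁻¹ * Z) := conj_key
      have hb1 : numOrbits (σ⁻¹ * Z) ≤ numOrbits (σ'⁻¹ * Z) + 1 := by
        rw [hkey]; exact numOrbits_le_swap_mul _ _ _
      have htri : numOrbits σ' + numOrbits (σ'⁻¹ * Z) ≤ k + 1 := by
        have h := numOrbits_triangle σ' (σ'⁻¹ * Z)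
        rw [mul_inv_cancel_left] at h
        omega
      have hble := numOrbits_le σ'
      have geo' : numOrbits σ' + numOrbits (σ'⁻¹ * Z) = k + 1 := by omega
      have hm' : k - numOrbits σ' ≤ m := by omega
      have hNC := ih σ' hm' geo'
      have hA : ∀ {x y : Fin k}, σ'.SameCycle x y → σ.SameCycle x y :=
        fun hxy => sameCycle_of_swap_mul hscab hxy
      have hfixa : σ' a = a := by
        rw [hσ', Equiv.Perm.mul_apply, Equiv.swap_apply_right]
      have P1 : ∀ {x y : Fin k}, ¬ σ.SameCycle x a → σ.SameCycle x y → σ'.SameCycle x y := by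
        intro x y hxa hxy
        rcases sameCycle_swap_mul_decomp (a := a) (b := σ a) hxy with h' | ⟨hx, -⟩
        · exact h'
        · exfalso
          rcases hx with hx | hx
          · exact hxa (hA hx)
          · exact hxa ((hA hx).trans hscab.symm)
      have P2 : ∀ {x y : Fin k}, σ.SameCycle x a → x ≠ a → σ.SameCycle y a → y ≠ a →
          σ'.SameCycle x y := by
        intro x y hxa hxna hya hyna
        have hx' : σ'.SameCycle x (σ a) := by
          rcases sameCycle_swap_mul_decomp (a := a) (b := σ a) (hxa.trans hscab)
            with h' | ⟨hx, -⟩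
          · exact h'
          · rcases hx with hx | hx
            · exact absurd (sameCycle_fixed hfixa hx.symm) hxna
            · exact hx
        have hy' : σ'.SameCycle y (σ a) := by
          rcases sameCycle_swap_mul_decomp (a := a) (b := σ a) (hya.trans hscab)
            with h' | ⟨hy, -⟩
          · exact h'
          · rcases hy with hy | hy
            · exact absurd (sameCycle_fixed hfixa hy.symm) hyna
            · exact hy
        exact hx'.trans hy'.symm
      by_cases hpa : σ.SameCycle p a
      · have hqa : ¬ σ.SameCycle q a := fun hc => hnpq (hpa.trans hc.symm)
        have hpr' : σ'.SameCycle p r := P2 hpa (Ne.symm hap) (hpr.symm.trans hpa) (Ne.symm har)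
        have hqt' : σ'.SameCycle q t := P1 hqa hqt
        exact hnpq (hA (hNC p q r t hpq hqr hrt hpr' hqt'))
      · by_cases hqa : σ.SameCycle q a
        · have hpr' : σ'.SameCycle p r := P1 hpa hpr
          have hqt' : σ'.SameCycle q t := P2 hqa (Ne.symm haq) (hqt.symm.trans hqa) (Ne.symm hat)
          exact hnpq (hA (hNC p q r t hpq hqr hrt hpr' hqt'))
        · have hpr' : σ'.SameCycle p r := P1 hpa hpr
          have hqt' : σ'.SameCycle q t := P1 hqa hqt
          exact hnpq (hA (hNC p q r t hpq hqr hrt hpr' hqt'))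

end NoncrossingAux

/-- **Geodesic triples for the full cycle are noncrossing.**
Let `k ≥ 1` and let `Z` be the full cycle `j ↦ j + 1 (mod k)` of `Fin k`.  Then
`|Z| = k − 1`, the inequality `|Z| ≤ |σ| + |σ⁻¹τ| + |τ⁻¹Z|` always holds, and whenever
`|σ| + |σ⁻¹τ| + |τ⁻¹Z| = k − 1`, the orbit partitions of both `σ` and `τ`
are noncrossing partitions of `Fin k`. -/
theorem noncrossing_of_geodesic (k : ℕ) [NeZero k]
    (Z : Equiv.Perm (Fin k)) (hZ : ∀ j, Z j = j + 1) :
    permLength Z = k - 1 ∧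
    (∀ σ τ : Equiv.Perm (Fin k),
      permLength Z ≤ permLength σ + permLength (σ⁻¹ * τ) + permLength (τ⁻¹ * Z)) ∧
    (∀ σ τ : Equiv.Perm (Fin k),
      permLength σ + permLength (σ⁻¹ * τ) + permLength (τ⁻¹ * Z) = k - 1 →
      IsNoncrossing σ ∧ IsNoncrossing τ) := by
  have hZall := z_sameCycle hZ
  have hnZ : numOrbits Z = 1 := numOrbits_eq_one hZall
  have hlen : permLength Z = k - 1 := by rw [permLength, hnZ]
  refine ⟨hlen, ?_, ?_⟩
  · intro σ τ
    have t1 := numOrbits_triangle σ (σ⁻¹ * τ)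
    rw [mul_inv_cancel_left] at t1
    have t2 := numOrbits_triangle τ (τ⁻¹ * Z)
    rw [mul_inv_cancel_left] at t2
    have b1 := numOrbits_le σ
    have b2 := numOrbits_le (σ⁻¹ * τ)
    have b3 := numOrbits_le (τ⁻¹ * Z)
    have c1 := numOrbits_pos σ
    have c2 := numOrbits_pos (σ⁻¹ * τ)
    have c3 := numOrbits_pos (τ⁻¹ * Z)
    have c4 := numOrbits_pos τ
    simp only [permLength, hnZ]
    omega
  · intro σ τ heq
    simp only [permLength] at heq
    have t1 := numOrbits_triangle σ (σ⁻¹ * Z)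
    rw [mul_inv_cancel_left] at t1
    have t2 := numOrbits_triangle (σ⁻¹ * τ) (τ⁻¹ * Z)
    have e2 : (σ⁻¹ * τ) * (τ⁻¹ * Z) = σ⁻¹ * Z := by
      rw [mul_assoc, mul_inv_cancel_left]
    rw [e2] at t2
    have t3 := numOrbits_triangle τ (τ⁻¹ * Z)
    rw [mul_inv_cancel_left] at t3
    have t4 := numOrbits_triangle σ (σ⁻¹ * τ)
    rw [mul_inv_cancel_left] at t4
    have b1 := numOrbits_le σ
    have b2 := numOrbits_le (σ⁻¹ * τ)
    have b3 := numOrbits_le (τ⁻¹ * Z)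
    have b4 := numOrbits_le τ
    have b5 := numOrbits_le (σ⁻¹ * Z)
    have c1 := numOrbits_pos σ
    have c2 := numOrbits_pos (σ⁻¹ * τ)
    have c3 := numOrbits_pos (τ⁻¹ * Z)
    have c4 := numOrbits_pos τ
    have c5 := numOrbits_pos (σ⁻¹ * Z)
    have geoσ : numOrbits σ + numOrbits (σ⁻¹ * Z) = k + 1 := by omega
    have geoτ : numOrbits τ + numOrbits (τ⁻¹ * Z) = k + 1 := by omega
    exact ⟨nc_main hZ k σ (by omega) geoσ, nc_main hZ k τ (by omega) geoτ⟩
end
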